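/- Let p ∈ (0,1) be real and n ∈ ℕ (including n = 0). There exists a constant C > 0 (depending on p and n) such that for all reals a > 0 and all complex z, w one has | (a + |z|²)^{(p−n)/2} z^n − (a + |w|²)^{(p−n)/2} w^n | ≤ C |z − w|^p. -/

import Mathlib

open Complex

noncomputable def regDeriv (a s : ℝ) (n : ℕ) (ζ : ℂ) : ℂ →L[ℝ] ℂ :=
  (((a + ‖ζ‖ ^ 2) ^ s : ℝ) : ℂ) •
      (ContinuousLinearMap.smulRight (1 : ℂ →L[ℂ] ℂ) ((n : ℂ) * ζ ^ (n - 1))).restrictScalars ℝ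
    + (ζ ^ n) • (Complex.ofRealCLM.comp
        ((s * (a + ‖ζ‖ ^ 2) ^ (s - 1)) •
          ((2 * ζ.re) • Complex.reCLM + (2 * ζ.im) • Complex.imCLM)))

lemma hasFDerivAt_reg (a s : ℝ) (ha : 0 < a) (n : ℕ) (ζ : ℂ) :
    HasFDerivAt (fun z : ℂ => (((a + ‖z‖ ^ 2) ^ s : ℝ) : ℂ) * z ^ n)
      (regDeriv a s n ζ) ζ := by
  have hA : 0 < a + ‖ζ‖ ^ 2 := by positivity
  have h1 : HasFDerivAt (fun z : ℂ => a + ‖z‖ ^ 2)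
      ((2 * ζ.re) • Complex.reCLM + (2 * ζ.im) • Complex.imCLM) ζ := by
    have heq : (fun z : ℂ => a + ‖z‖ ^ 2)
        = fun z : ℂ => a + (z.re * z.re + z.im * z.im) := by
      funext z; rw [Complex.sq_norm, Complex.normSq_apply]
    rw [heq]
    have hre := (Complex.reCLM.hasFDerivAt (x := ζ)).mul (Complex.reCLM.hasFDerivAt (x := ζ))
    have him := (Complex.imCLM.hasFDerivAt (x := ζ)).mul (Complex.imCLM.hasFDerivAt (x := ζ))
    have := (hasFDerivAt_const a ζ).add (hre.add him)
    refine this.congr_fderiv ?_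
    ext h
    simp [Complex.reCLM, Complex.imCLM]
    ring
  have h2 : HasDerivAt (fun x : ℝ => x ^ s)
      (s * (a + ‖ζ‖ ^ 2) ^ (s - 1)) (a + ‖ζ‖ ^ 2) :=
    Real.hasDerivAt_rpow_const (Or.inl hA.ne')
  have h3 : HasFDerivAt (fun z : ℂ => (a + ‖z‖ ^ 2) ^ s)
      ((s * (a + ‖ζ‖ ^ 2) ^ (s - 1)) •
        ((2 * ζ.re) • Complex.reCLM + (2 * ζ.im) • Complex.imCLM)) ζ :=
    by have := h2.comp_hasFDerivAt ζ h1; exact this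
  have h4 : HasFDerivAt (fun z : ℂ => (((a + ‖z‖ ^ 2) ^ s : ℝ) : ℂ))
      (Complex.ofRealCLM.comp
        ((s * (a + ‖ζ‖ ^ 2) ^ (s - 1)) •
          ((2 * ζ.re) • Complex.reCLM + (2 * ζ.im) • Complex.imCLM))) ζ :=
    Complex.ofRealCLM.hasFDerivAt.comp ζ h3
  have h5 : HasFDerivAt (fun z : ℂ => z ^ n)
      ((ContinuousLinearMap.smulRight (1 : ℂ →L[ℂ] ℂ)
        ((n : ℂ) * ζ ^ (n - 1))).restrictScalars ℝ) ζ :=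
    (hasDerivAt_pow n ζ).hasFDerivAt.restrictScalars ℝ
  exact h4.mul h5

lemma regDeriv_norm_le (p : ℝ) (hp0 : 0 < p) (hp1 : p < 1) (n : ℕ) (a : ℝ) (ha : 0 < a)
    (ζ : ℂ) (hζ : ζ ≠ 0) :
    ‖regDeriv a ((p - n) / 2) n ζ‖ ≤ (3 * n + 2) * ‖ζ‖ ^ (p - 1) := by
  set s : ℝ := (p - n) / 2 with hs_def
  set r : ℝ := ‖ζ‖ with hr_def
  have hr : 0 < r := norm_pos_iff.mpr hζ
  set A : ℝ := a + r ^ 2 with hA_def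
  have hA : 0 < A := by positivity
  have hA2 : r ^ 2 ≤ A := by linarith
  have hL : ‖(2 * ζ.re) • Complex.reCLM + (2 * ζ.im) • Complex.imCLM‖ ≤ 4 * r := by
    refine ContinuousLinearMap.opNorm_le_bound _ (by positivity) fun h => ?_
    have h1 : |ζ.re| ≤ r := Complex.abs_re_le_norm ζ
    have h2 : |ζ.im| ≤ r := Complex.abs_im_le_norm ζ
    have h3 : |h.re| ≤ ‖h‖ := by exact Complex.abs_re_le_norm h
    have h4 : |h.im| ≤ ‖h‖ := by exact Complex.abs_im_le_norm h
    have hh : 0 ≤ ‖h‖ := norm_nonneg h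
    simp only [ContinuousLinearMap.add_apply, ContinuousLinearMap.coe_smul',
      Pi.smul_apply, Complex.reCLM_apply, Complex.imCLM_apply, smul_eq_mul,
      Real.norm_eq_abs]
    calc |2 * ζ.re * h.re + 2 * ζ.im * h.im|
        ≤ |2 * ζ.re * h.re| + |2 * ζ.im * h.im| := abs_add_le _ _
      _ = 2 * (|ζ.re| * |h.re|) + 2 * (|ζ.im| * |h.im|) := by
          rw [abs_mul, abs_mul, abs_mul, abs_mul]; simp [abs_of_nonneg]; ring
      _ ≤ 2 * (r * ‖h‖) + 2 * (r * ‖h‖) := by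
          gcongr <;> first | assumption | positivity
      _ = 4 * r * ‖h‖ := by ring
  have key : ‖regDeriv a s n ζ‖
      ≤ A ^ s * (n * r ^ (n - 1)) + r ^ n * (|s| * A ^ (s - 1) * (4 * r)) := by
    unfold regDeriv
    refine le_trans (norm_add_le _ _) ?_
    gcongr ?_ + ?_
    · refine le_trans (ContinuousLinearMap.opNorm_smul_le _ _) ?_
      rw [ContinuousLinearMap.norm_restrictScalars, ContinuousLinearMap.norm_smulRight_apply,
        ContinuousLinearMap.one_def, ContinuousLinearMap.norm_id, one_mul]
      rw [Complex.norm_real, Real.norm_eq_abs, _root_.abs_of_nonneg (Real.rpow_nonneg hA.le s)]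
      rw [norm_mul, norm_pow, Complex.norm_natCast, ← hr_def]
    · refine le_trans (ContinuousLinearMap.opNorm_smul_le _ _) ?_
      rw [norm_pow, ← hr_def]
      refine mul_le_mul_of_nonneg_left ?_ (by positivity)
      refine le_trans (ContinuousLinearMap.opNorm_comp_le _ _) ?_
      have hofReal : ‖Complex.ofRealCLM‖ ≤ 1 :=
        ContinuousLinearMap.opNorm_le_bound _ zero_le_one (by simp)
      have hX : ‖(s * A ^ (s - 1)) • ((2 * ζ.re) • Complex.reCLM + (2 * ζ.im) • Complex.imCLM)‖
          ≤ |s| * A ^ (s - 1) * (4 * r) := by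
        refine le_trans (ContinuousLinearMap.opNorm_smul_le _ _) ?_
        rw [Real.norm_eq_abs, abs_mul, _root_.abs_of_nonneg (Real.rpow_nonneg hA.le (s - 1))]
        exact mul_le_mul_of_nonneg_left hL (by positivity)
      calc ‖Complex.ofRealCLM‖ *
            ‖(s * A ^ (s - 1)) • ((2 * ζ.re) • Complex.reCLM + (2 * ζ.im) • Complex.imCLM)‖
          ≤ 1 * (|s| * A ^ (s - 1) * (4 * r)) :=
            mul_le_mul hofReal hX (norm_nonneg _) zero_le_one
        _ = |s| * A ^ (s - 1) * (4 * r) := one_mul _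
  have h1 : A ^ s * (n * r ^ (n - 1)) ≤ n * r ^ (p - 1) := by
    rcases Nat.eq_zero_or_pos n with hn | hn
    · subst hn; simp
    · have hn1 : (1 : ℝ) ≤ n := by exact_mod_cast hn
      have hs_neg : s ≤ 0 := by rw [hs_def]; linarith
      have e1 : A ^ s ≤ r ^ (2 * s) := by
        have h := Real.rpow_le_rpow_of_nonpos (by positivity : (0:ℝ) < r ^ 2) hA2 hs_neg
        rwa [← Real.rpow_natCast r 2, ← Real.rpow_mul hr.le, Nat.cast_ofNat] at h
      have e2 : (r : ℝ) ^ (n - 1) = r ^ ((n : ℝ) - 1) := by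
        rw [← Real.rpow_natCast r (n - 1), Nat.cast_sub hn, Nat.cast_one]
      calc A ^ s * (n * r ^ (n - 1)) = n * (A ^ s * r ^ ((n : ℝ) - 1)) := by rw [e2]; ring
        _ ≤ n * (r ^ (2 * s) * r ^ ((n : ℝ) - 1)) := by
            refine mul_le_mul_of_nonneg_left ?_ (Nat.cast_nonneg n)
            exact mul_le_mul_of_nonneg_right e1 (Real.rpow_nonneg hr.le _)
        _ = n * r ^ (p - 1) := by
            rw [← Real.rpow_add hr]
            have hexp : 2 * s + ((n : ℝ) - 1) = p - 1 := by rw [hs_def]; ring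
            rw [hexp]
  have h2 : r ^ n * (|s| * A ^ (s - 1) * (4 * r)) ≤ (2 * n + 2) * r ^ (p - 1) := by
    have h0n : (0 : ℝ) ≤ n := Nat.cast_nonneg n
    have hs1 : s - 1 ≤ 0 := by rw [hs_def]; linarith
    have e1 : A ^ (s - 1) ≤ r ^ (2 * (s - 1)) := by
      have h := Real.rpow_le_rpow_of_nonpos (by positivity : (0:ℝ) < r ^ 2) hA2 hs1
      rwa [← Real.rpow_natCast r 2, ← Real.rpow_mul hr.le, Nat.cast_ofNat] at h
    have habs : |s| ≤ ((n : ℝ) + 1) / 2 := by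
      rw [hs_def, abs_div, _root_.abs_two]
      have : |p - (n : ℝ)| ≤ (n : ℝ) + 1 := abs_le.mpr ⟨by linarith, by linarith⟩
      linarith
    have e2 : r ^ n = r ^ ((n : ℝ)) := (Real.rpow_natCast r n).symm
    calc r ^ n * (|s| * A ^ (s - 1) * (4 * r))
        ≤ r ^ ((n : ℝ)) * ((((n : ℝ) + 1) / 2) * r ^ (2 * (s - 1)) * (4 * r)) := by
          rw [e2]
          refine mul_le_mul_of_nonneg_left ?_ (Real.rpow_nonneg hr.le _)
          refine mul_le_mul_of_nonneg_right ?_ (by positivity)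
          exact mul_le_mul habs e1 (Real.rpow_nonneg hA.le _) (by positivity)
      _ = (2 * (n : ℝ) + 2) * (r ^ ((n : ℝ)) * r ^ (2 * (s - 1)) * r ^ (1 : ℝ)) := by
          rw [Real.rpow_one]; ring
      _ = (2 * n + 2) * r ^ (p - 1) := by
          rw [← Real.rpow_add hr, ← Real.rpow_add hr]
          have hexp : (n : ℝ) + 2 * (s - 1) + 1 = p - 1 := by rw [hs_def]; ring
          rw [hexp]
  calc ‖regDeriv a s n ζ‖
      ≤ A ^ s * (n * r ^ (n - 1)) + r ^ n * (|s| * A ^ (s - 1) * (4 * r)) := key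
    _ ≤ n * r ^ (p - 1) + (2 * n + 2) * r ^ (p - 1) := add_le_add h1 h2
    _ = (3 * n + 2) * r ^ (p - 1) := by ring

private lemma real_rpow_add_le {x y q : ℝ} (hx : 0 ≤ x) (hy : 0 ≤ y) (hq : 0 ≤ q) (hq1 : q ≤ 1) :
    (x + y) ^ q ≤ x ^ q + y ^ q := by
  lift x to NNReal using hx
  lift y to NNReal using hy
  have := NNReal.rpow_add_le_add_rpow x y hq hq1
  exact_mod_cast this

private lemma abs_f_le (p : ℝ) (hp0 : 0 < p) (hp1 : p < 1) (n : ℕ) (hn : 1 ≤ n)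
    (a : ℝ) (ha : 0 < a) (v : ℂ) :
    ‖((((a + ‖v‖ ^ 2) ^ ((p - (n : ℝ)) / 2) : ℝ) : ℂ) * v ^ n)‖
      ≤ ‖v‖ ^ p := by
  rcases eq_or_ne v 0 with rfl | hv
  · simp [Real.zero_rpow hp0.ne', zero_pow (by omega : n ≠ 0)]
  · set r := ‖v‖ with hrdef
    have hr : 0 < r := norm_pos_iff.mpr hv
    have hA : 0 < a + r ^ 2 := by positivity
    have hn1 : (1 : ℝ) ≤ n := by exact_mod_cast hn
    have hs : (p - (n : ℝ)) / 2 ≤ 0 := by linarith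
    rw [norm_mul, Complex.norm_real, Real.norm_eq_abs, norm_pow, ← hrdef,
      _root_.abs_of_nonneg (Real.rpow_nonneg hA.le _)]
    have e1 : (a + r ^ 2) ^ ((p - (n : ℝ)) / 2) ≤ r ^ (2 * ((p - (n : ℝ)) / 2)) := by
      have h := Real.rpow_le_rpow_of_nonpos (by positivity : (0:ℝ) < r ^ 2)
        (by linarith : r ^ 2 ≤ a + r ^ 2) hs
      rw [← Real.rpow_natCast r 2, ← Real.rpow_mul hr.le] at h
      convert h using 2 <;> norm_num
    calc (a + r ^ 2) ^ ((p - (n : ℝ)) / 2) * r ^ n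
        ≤ r ^ (2 * ((p - (n : ℝ)) / 2)) * r ^ ((n : ℝ)) := by
          rw [Real.rpow_natCast]
          exact mul_le_mul_of_nonneg_right e1 (pow_nonneg hr.le n)
      _ = r ^ p := by
          rw [← Real.rpow_add hr]
          have hexp : 2 * ((p - (n : ℝ)) / 2) + (n : ℝ) = p := by ring
          rw [hexp]

private lemma key_half (p : ℝ) (hp0 : 0 < p) (hp1 : p < 1) (n : ℕ) (a : ℝ) (ha : 0 < a)
    (z w : ℂ) (hzw : ‖w‖ ≤ ‖z‖) :
    ‖((((a + ‖z‖ ^ 2) ^ ((p - (n : ℝ)) / 2) : ℝ) : ℂ) * z ^ n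
        - (((a + ‖w‖ ^ 2) ^ ((p - (n : ℝ)) / 2) : ℝ) : ℂ) * w ^ n)‖
      ≤ (3 * n + 12) * ‖(z - w)‖ ^ p := by
  rcases eq_or_ne z w with rfl | hne
  · simp [Real.zero_rpow hp0.ne']
  set d := ‖(z - w)‖ with hd_def
  have hd : 0 < d := norm_pos_iff.mpr (sub_ne_zero.mpr hne)
  have hz0 : 0 < ‖z‖ := by
    rcases eq_or_ne z 0 with rfl | hz
    · exfalso
      apply hne
      have h0 : ‖w‖ = 0 :=
        le_antisymm (by simpa using hzw) (norm_nonneg w)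
      rw [norm_eq_zero] at h0
      rw [h0]
    · exact norm_pos_iff.mpr hz
  have hdp : (0 : ℝ) ≤ d ^ p := Real.rpow_nonneg hd.le p
  by_cases hcase : d ≤ ‖z‖ / 2
  · -- near case: mean value inequality on the segment [w, z]
    set S := segment ℝ w z with hS_def
    have hseg : ∀ ζ ∈ S, ‖z‖ / 2 ≤ ‖ζ‖ := by
      rintro ζ ⟨u, t, hu, ht, hut, rfl⟩
      have hzz : z - (u • w + t • z) = u • (z - w) := by
        have hz1 : z = u • z + t • z := by rw [← add_smul, hut, one_smul]
        calc z - (u • w + t • z) = (u • z + t • z) - (u • w + t • z) := by rw [← hz1]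
          _ = u • (z - w) := by rw [smul_sub]; abel
      have hu1 : u ≤ 1 := by linarith
      have h2 : ‖(z - (u • w + t • z))‖ ≤ d := by
        rw [hzz, Complex.real_smul, norm_mul, Complex.norm_real, Real.norm_eq_abs,
          _root_.abs_of_nonneg hu, ← hd_def]
        nlinarith
      have h3 : ‖z‖ - ‖(u • w + t • z)‖
          ≤ ‖(z - (u • w + t • z))‖ := by
        have := abs_norm_sub_norm_le z (u • w + t • z)
        have := le_abs_self (‖z‖ - ‖(u • w + t • z)‖)
        linarith
      linarith
    have hderiv : ∀ ζ ∈ S, HasFDerivWithinAt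
        (fun z : ℂ => (((a + ‖z‖ ^ 2) ^ ((p - (n : ℝ)) / 2) : ℝ) : ℂ) * z ^ n)
        (regDeriv a ((p - (n : ℝ)) / 2) n ζ) S ζ :=
      fun ζ _ => (hasFDerivAt_reg a _ ha n ζ).hasFDerivWithinAt
    have hbound : ∀ ζ ∈ S, ‖regDeriv a ((p - (n : ℝ)) / 2) n ζ‖
        ≤ (3 * n + 2) * (‖z‖ / 2) ^ (p - 1) := by
      intro ζ hζ
      have h1 := hseg ζ hζ
      have hζ0 : ζ ≠ 0 := by
        intro h
        rw [h] at h1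
        simp only [norm_zero] at h1
        linarith
      refine (regDeriv_norm_le p hp0 hp1 n a ha ζ hζ0).trans ?_
      refine mul_le_mul_of_nonneg_left ?_ (by positivity)
      exact Real.rpow_le_rpow_of_nonpos (by positivity) h1 (by linarith)
    have hmvt := (convex_segment w z).norm_image_sub_le_of_norm_hasFDerivWithin_le hderiv hbound
      (left_mem_segment ℝ w z) (right_mem_segment ℝ w z)
    rw [← hd_def] at hmvt
    have hdd : d ^ (p - 1) * d = d ^ p := by
      rw [← Real.rpow_add_one hd.ne' (p - 1)]
      ring_nf
    calc ‖((((a + ‖z‖ ^ 2) ^ ((p - (n : ℝ)) / 2) : ℝ) : ℂ) * z ^ n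
          - (((a + ‖w‖ ^ 2) ^ ((p - (n : ℝ)) / 2) : ℝ) : ℂ) * w ^ n)‖
        ≤ (3 * n + 2) * (‖z‖ / 2) ^ (p - 1) * d := hmvt
      _ ≤ (3 * n + 2) * d ^ (p - 1) * d := by
          have h := Real.rpow_le_rpow_of_nonpos hd hcase (by linarith : p - 1 ≤ 0)
          have hc : (0:ℝ) ≤ 3 * n + 2 := by positivity
          exact mul_le_mul_of_nonneg_right (mul_le_mul_of_nonneg_left h hc) hd.le
      _ = (3 * n + 2) * d ^ p := by rw [mul_assoc, hdd]
      _ ≤ (3 * n + 12) * d ^ p := by nlinarith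
  · push_neg at hcase
    have hz2d : ‖z‖ ≤ 2 * d := by linarith
    rcases Nat.eq_zero_or_pos n with hn | hn
    · subst hn
      simp only [pow_zero, mul_one, Nat.cast_zero, sub_zero]
      rw [← Complex.ofReal_sub, Complex.norm_real, Real.norm_eq_abs]
      set B := a + ‖w‖ ^ 2 with hB_def
      set A := a + ‖z‖ ^ 2 with hA_def
      have hBpos : 0 < B := by positivity
      have hApos : 0 < A := by positivity
      have hBA : B ≤ A := by
        have := norm_nonneg w
        nlinarith
      have hq0 : 0 ≤ p / 2 := by linarith
      have hq1 : p / 2 ≤ 1 := by linarith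
      have hmono : B ^ (p / 2) ≤ A ^ (p / 2) := Real.rpow_le_rpow hBpos.le hBA hq0
      rw [_root_.abs_of_nonneg (by linarith : (0:ℝ) ≤ A ^ (p / 2) - B ^ (p / 2))]
      have step : A ^ (p / 2) ≤ (A - B) ^ (p / 2) + B ^ (p / 2) := by
        have h := real_rpow_add_le (x := A - B) (y := B) (by linarith) hBpos.le hq0 hq1
        calc A ^ (p / 2) = ((A - B) + B) ^ (p / 2) := by ring_nf
          _ ≤ (A - B) ^ (p / 2) + B ^ (p / 2) := h
      have hABd : A - B ≤ 4 * d ^ 2 := by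
        have h1 : ‖z‖ - ‖w‖ ≤ d := by
          have h := abs_norm_sub_norm_le z w
          have := le_abs_self (‖z‖ - ‖w‖)
          rw [← hd_def] at h
          linarith
        have h2 : ‖w‖ ≤ ‖z‖ := hzw
        have h3 := norm_nonneg w
        have hAB : A - B = ‖z‖ ^ 2 - ‖w‖ ^ 2 := by
          rw [hA_def, hB_def]; ring
        nlinarith
      have final : (A - B) ^ (p / 2) ≤ 2 * d ^ p := by
        calc (A - B) ^ (p / 2) ≤ (4 * d ^ 2) ^ (p / 2) :=
              Real.rpow_le_rpow (by linarith) hABd hq0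
          _ = 4 ^ (p / 2) * (d ^ 2) ^ (p / 2) := Real.mul_rpow (by norm_num) (by positivity)
          _ = 4 ^ (p / 2) * d ^ p := by
              rw [← Real.rpow_natCast d 2, ← Real.rpow_mul hd.le, Nat.cast_ofNat]
              have : (2:ℝ) * (p / 2) = p := by ring
              rw [this]
          _ ≤ 2 * d ^ p := by
              have h4 : (4:ℝ) ^ (p / 2) ≤ 4 ^ ((1:ℝ) / 2) :=
                Real.rpow_le_rpow_of_exponent_le (by norm_num) (by linarith)
              have h5 : (4:ℝ) ^ ((1:ℝ) / 2) = 2 := by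
                rw [show (4:ℝ) = 2 ^ 2 by norm_num, ← Real.rpow_natCast 2 2,
                  ← Real.rpow_mul (by norm_num : (0:ℝ) ≤ 2), Nat.cast_ofNat]
                norm_num
              nlinarith
      have : 2 * d ^ p ≤ (3 * (0:ℕ) + 12) * d ^ p := by
        push_cast
        nlinarith
      push_cast at this ⊢
      linarith
    · have hn1 : 1 ≤ n := hn
      have hfz := abs_f_le p hp0 hp1 n hn1 a ha z
      have hfw := abs_f_le p hp0 hp1 n hn1 a ha w
      have htri : ‖((((a + ‖z‖ ^ 2) ^ ((p - (n : ℝ)) / 2) : ℝ) : ℂ) * z ^ n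
            - (((a + ‖w‖ ^ 2) ^ ((p - (n : ℝ)) / 2) : ℝ) : ℂ) * w ^ n)‖
          ≤ ‖((((a + ‖z‖ ^ 2) ^ ((p - (n : ℝ)) / 2) : ℝ) : ℂ) * z ^ n)‖
            + ‖((((a + ‖w‖ ^ 2) ^ ((p - (n : ℝ)) / 2) : ℝ) : ℂ) * w ^ n)‖ :=
        by exact norm_sub_le _ _
      have hwz : ‖w‖ ^ p ≤ ‖z‖ ^ p :=
        Real.rpow_le_rpow (norm_nonneg w) hzw hp0.le
      have hz2 : ‖z‖ ^ p ≤ (2 * d) ^ p :=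
        Real.rpow_le_rpow hz0.le hz2d hp0.le
      have h2d : (2 * d) ^ p = 2 ^ p * d ^ p := Real.mul_rpow (by norm_num) hd.le
      have h2p : (2:ℝ) ^ p ≤ 2 := by
        have := Real.rpow_le_rpow_of_exponent_le (by norm_num : (1:ℝ) ≤ 2) hp1.le
        rwa [Real.rpow_one] at this
      have hn0 : (0:ℝ) ≤ n := Nat.cast_nonneg n
      calc ‖((((a + ‖z‖ ^ 2) ^ ((p - (n : ℝ)) / 2) : ℝ) : ℂ) * z ^ n
            - (((a + ‖w‖ ^ 2) ^ ((p - (n : ℝ)) / 2) : ℝ) : ℂ) * w ^ n)‖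
          ≤ ‖z‖ ^ p + ‖w‖ ^ p := htri.trans (add_le_add hfz hfw)
        _ ≤ 2 * ‖z‖ ^ p := by linarith
        _ ≤ 2 * (2 ^ p * d ^ p) := by rw [← h2d]; linarith
        _ ≤ (3 * n + 12) * d ^ p := by nlinarith

/-- Lemma 5.4 (mph:2), first part: for `p ∈ (0,1)` and `n : ℕ`, there is `C > 0` such that
`| (a + |z|²)^((p−n)/2) z^n − (a + |w|²)^((p−n)/2) w^n | ≤ C |z − w|^p`
for all `a > 0` and `z w : ℂ`. -/
theorem regularized_power_holder (p : ℝ) (hp0 : 0 < p) (hp1 : p < 1) (n : ℕ) :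
    ∃ C : ℝ, 0 < C ∧ ∀ a : ℝ, 0 < a → ∀ z w : ℂ,
      ‖((((a + ‖z‖ ^ 2) ^ ((p - (n : ℝ)) / 2) : ℝ) : ℂ) * z ^ n
          - (((a + ‖w‖ ^ 2) ^ ((p - (n : ℝ)) / 2) : ℝ) : ℂ) * w ^ n)‖
        ≤ C * ‖z - w‖ ^ p := by
  refine ⟨3 * n + 12, by positivity, fun a ha z w => ?_⟩
  rcases le_total (‖w‖) (‖z‖) with h | h
  · exact key_half p hp0 hp1 n a ha z w h
  · have hk := key_half p hp0 hp1 n a ha w z h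
    rw [norm_sub_rev, norm_sub_rev w z] at hk
    exact hk
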